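/- Let Δ be an additive subgroup of ℂ and let A be the vector space with basis {x_{α,i} : α ∈ Δ, i ∈ ℕ}. Then the bracket [x_{α,i}, x_{β,j}] = (β−α) x_{α+β,i+j} + (j−i) x_{α+β,i+j−1} (with x_{α,−1}=0, extended bilinearly) defines a Lie algebra structure on A. -/

import Mathlib

open Finsupp

noncomputable section Stmt5Aux

namespace Stmt5

variable (Δ : AddSubgroup ℂ)

abbrev T := (Δ × ℕ) →₀ ℂ

/-- bracket on basis elements -/
def f (p q : Δ × ℕ) : T Δ :=
  ((q.1 : ℂ) - (p.1 : ℂ)) • single (p.1 + q.1, p.2 + q.2) 1 +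
  ((q.2 : ℂ) - (p.2 : ℂ)) • single (p.1 + q.1, p.2 + q.2 - 1) 1

def br : T Δ →ₗ[ℂ] T Δ →ₗ[ℂ] T Δ :=
  Finsupp.lsum ℂ fun p => LinearMap.toSpanSingleton ℂ _
    (Finsupp.lsum ℂ fun q => LinearMap.toSpanSingleton ℂ _ (f Δ p q))

lemma br_single_one (p q : Δ × ℕ) :
    br Δ (single p 1) (single q 1) = f Δ p q := by
  simp [br, Finsupp.lsum_single, LinearMap.toSpanSingleton_apply]

/-- basis element with integer index, zero for negative index -/
def sing (α : Δ) (m : ℤ) : T Δ := if 0 ≤ m then single (α, m.toNat) 1 else 0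

lemma f_eq (α β : Δ) (i j : ℕ) :
    f Δ (α, i) (β, j) =
      ((β : ℂ) - (α : ℂ)) • sing Δ (α + β) ((i : ℤ) + j) +
      ((j : ℂ) - (i : ℂ)) • sing Δ (α + β) ((i : ℤ) + j - 1) := by
  by_cases h : i = 0 ∧ j = 0
  · obtain ⟨hi, hj⟩ := h
    subst hi; subst hj
    simp [f, sing]
  · have h1 : 0 ≤ (i : ℤ) + j := by positivity
    have h2 : 0 ≤ (i : ℤ) + j - 1 := by omega
    have h3 : ((i : ℤ) + j).toNat = i + j := by omega
    have h4 : ((i : ℤ) + j - 1).toNat = i + j - 1 := by omega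
    simp [f, sing, h1, h2, h3, h4]
    intro hlt; exfalso; omega

lemma br_sing (c : ℂ) (α β : Δ) (m : ℤ) (j : ℕ) (h : 0 ≤ m ∨ c = 0) :
    c • br Δ (sing Δ α m) (single (β, j) 1) =
    c • (((β : ℂ) - (α : ℂ)) • sing Δ (α + β) (m + j) +
      ((j : ℂ) - (m : ℂ)) • sing Δ (α + β) (m + j - 1)) := by
  rcases h with h | h
  · have hs : sing Δ α m = single (α, m.toNat) 1 := if_pos h
    have h1 : ((m.toNat : ℕ) : ℤ) = m := Int.toNat_of_nonneg h
    have h2 : ((m.toNat : ℕ) : ℂ) = (m : ℂ) := by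
      rw [← Int.cast_natCast, h1]
    rw [hs, br_single_one, f_eq, h2, h1]
  · simp [h]

lemma f_skew (p q : Δ × ℕ) : f Δ p q + f Δ q p = 0 := by
  obtain ⟨α, i⟩ := p
  obtain ⟨β, j⟩ := q
  simp only [f]
  rw [show β + α = α + β from add_comm β α, show j + i = i + j from add_comm j i]
  module

lemma jacf (p q r : Δ × ℕ) :
    br Δ (f Δ p q) (single r 1) + br Δ (f Δ q r) (single p 1) +
      br Δ (f Δ r p) (single q 1) = 0 := by
  obtain ⟨α, i⟩ := p
  obtain ⟨β, j⟩ := q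
  obtain ⟨γ, k⟩ := r
  rw [f_eq, f_eq, f_eq]
  simp only [map_add, map_smul, LinearMap.add_apply, LinearMap.smul_apply]
  have d1 : (0 ≤ (i : ℤ) + j) ∨ (((j : ℂ) - (i : ℂ)) = 0) := Or.inl (by positivity)
  have d2 : (0 ≤ (i : ℤ) + j - 1) ∨ (((j : ℂ) - (i : ℂ)) = 0) := by
    by_cases h : i = 0 ∧ j = 0
    · exact Or.inr (by simp [h.1, h.2])
    · exact Or.inl (by omega)
  have e1 : (0 ≤ (j : ℤ) + k) ∨ (((k : ℂ) - (j : ℂ)) = 0) := Or.inl (by positivity)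
  have e2 : (0 ≤ (j : ℤ) + k - 1) ∨ (((k : ℂ) - (j : ℂ)) = 0) := by
    by_cases h : j = 0 ∧ k = 0
    · exact Or.inr (by simp [h.1, h.2])
    · exact Or.inl (by omega)
  have g1 : (0 ≤ (k : ℤ) + i) ∨ (((i : ℂ) - (k : ℂ)) = 0) := Or.inl (by positivity)
  have g2 : (0 ≤ (k : ℤ) + i - 1) ∨ (((i : ℂ) - (k : ℂ)) = 0) := by
    by_cases h : k = 0 ∧ i = 0
    · exact Or.inr (by simp [h.1, h.2])
    · exact Or.inl (by omega)
  rw [br_sing Δ _ _ _ _ _ (Or.inl (by positivity : (0:ℤ) ≤ (i : ℤ) + j)),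
      br_sing Δ _ _ _ _ _ d2,
      br_sing Δ _ _ _ _ _ (Or.inl (by positivity : (0:ℤ) ≤ (j : ℤ) + k)),
      br_sing Δ _ _ _ _ _ e2,
      br_sing Δ _ _ _ _ _ (Or.inl (by positivity : (0:ℤ) ≤ (k : ℤ) + i)),
      br_sing Δ _ _ _ _ _ g2]
  rw [show β + γ + α = α + β + γ from by abel, show γ + α + β = α + β + γ from by abel]
  push_cast
  ring_nf
  match_scalars <;> ring

lemma antisymm (u v : T Δ) : br Δ u v + br Δ v u = 0 := by
  induction u using Finsupp.induction_linear with
  | zero => simp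
  | add a b ha hb =>
    simp only [map_add, LinearMap.add_apply]
    calc br Δ a v + br Δ b v + (br Δ v a + br Δ v b)
        = (br Δ a v + br Δ v a) + (br Δ b v + br Δ v b) := by abel
      _ = 0 := by rw [ha, hb, add_zero]
  | single p c =>
    induction v using Finsupp.induction_linear with
    | zero => simp
    | add a b ha hb =>
      simp only [map_add, LinearMap.add_apply]
      calc br Δ (single p c) a + br Δ (single p c) b + (br Δ a (single p c) + br Δ b (single p c))
          = (br Δ (single p c) a + br Δ a (single p c)) +
            (br Δ (single p c) b + br Δ b (single p c)) := by abel
        _ = 0 := by rw [ha, hb, add_zero]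
    | single q d =>
      rw [show (single p c : T Δ) = c • single p 1 by simp [Finsupp.smul_single'],
          show (single q d : T Δ) = d • single q 1 by simp [Finsupp.smul_single']]
      simp only [map_smul, LinearMap.smul_apply, br_single_one]
      calc _ = (c * d) • (f Δ p q + f Δ q p) := by module
        _ = 0 := by rw [f_skew]; simp

lemma jacobi (u v w : T Δ) :
    br Δ (br Δ u v) w + br Δ (br Δ v w) u + br Δ (br Δ w u) v = 0 := by
  induction u using Finsupp.induction_linear with
  | zero => simp
  | add a b ha hb =>
    simp only [map_add, LinearMap.add_apply]
    calc br Δ (br Δ a v) w + br Δ (br Δ b v) w +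
          (br Δ (br Δ v w) a + br Δ (br Δ v w) b) +
          (br Δ (br Δ w a) v + br Δ (br Δ w b) v)
        = (br Δ (br Δ a v) w + br Δ (br Δ v w) a + br Δ (br Δ w a) v) +
          (br Δ (br Δ b v) w + br Δ (br Δ v w) b + br Δ (br Δ w b) v) := by abel
      _ = 0 := by rw [ha, hb, add_zero]
  | single p c =>
    induction v using Finsupp.induction_linear with
    | zero => simp
    | add a b ha hb =>
      simp only [map_add, LinearMap.add_apply]
      calc br Δ (br Δ (single p c) a) w + br Δ (br Δ (single p c) b) w +
            (br Δ (br Δ a w) (single p c) + br Δ (br Δ b w) (single p c)) +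
            (br Δ (br Δ w (single p c)) a + br Δ (br Δ w (single p c)) b)
          = (br Δ (br Δ (single p c) a) w + br Δ (br Δ a w) (single p c) +
              br Δ (br Δ w (single p c)) a) +
            (br Δ (br Δ (single p c) b) w + br Δ (br Δ b w) (single p c) +
              br Δ (br Δ w (single p c)) b) := by abel
        _ = 0 := by rw [ha, hb, add_zero]
    | single q d =>
      induction w using Finsupp.induction_linear with
      | zero => simp
      | add a b ha hb =>
        simp only [map_add, LinearMap.add_apply]
        calc br Δ (br Δ (single p c) (single q d)) a +
              br Δ (br Δ (single p c) (single q d)) b +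
              (br Δ (br Δ (single q d) a) (single p c) +
               br Δ (br Δ (single q d) b) (single p c)) +
              (br Δ (br Δ a (single p c)) (single q d) +
               br Δ (br Δ b (single p c)) (single q d))
            = (br Δ (br Δ (single p c) (single q d)) a +
               br Δ (br Δ (single q d) a) (single p c) +
               br Δ (br Δ a (single p c)) (single q d)) +
              (br Δ (br Δ (single p c) (single q d)) b +
               br Δ (br Δ (single q d) b) (single p c) +
               br Δ (br Δ b (single p c)) (single q d)) := by abel
          _ = 0 := by rw [ha, hb, add_zero]
      | single r e =>
        rw [show (single p c : T Δ) = c • single p 1 by simp [Finsupp.smul_single'],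
            show (single q d : T Δ) = d • single q 1 by simp [Finsupp.smul_single'],
            show (single r e : T Δ) = e • single r 1 by simp [Finsupp.smul_single']]
        simp only [map_smul, LinearMap.smul_apply, br_single_one]
        calc _ = (c * d * e) • (br Δ (f Δ p q) (single r 1) +
                br Δ (f Δ q r) (single p 1) + br Δ (f Δ r p) (single q 1)) := by module
          _ = 0 := by rw [jacf]; simp

end Stmt5

end Stmt5Aux

/-- The bracket [x_{α,i}, x_{β,j}] = (β−α)x_{α+β,i+j} + (j−i)x_{α+β,i+j−1}
defines a Lie algebra structure on the free ℂ-space with basis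
{x_{α,i} : α ∈ Δ, i ∈ ℕ}. -/
theorem stmt_5 (Δ : AddSubgroup ℂ) :
    ∃ br : ((Δ × ℕ) →₀ ℂ) →ₗ[ℂ] ((Δ × ℕ) →₀ ℂ) →ₗ[ℂ] ((Δ × ℕ) →₀ ℂ),
      (∀ (α β : Δ) (i j : ℕ), br (single (α, i) 1) (single (β, j) 1) =
        ((β : ℂ) - (α : ℂ)) • single (α + β, i + j) 1 +
        ((j : ℂ) - (i : ℂ)) • single (α + β, i + j - 1) 1) ∧
      (∀ u, br u u = 0) ∧
      (∀ u v w, br (br u v) w + br (br v w) u + br (br w u) v = 0) := by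
  refine ⟨Stmt5.br Δ, fun α β i j => ?_, fun u => ?_, Stmt5.jacobi Δ⟩
  · rw [Stmt5.br_single_one]
    rfl
  · have h := Stmt5.antisymm Δ u u
    have h2 : (2 : ℂ) • Stmt5.br Δ u u = 0 := by rw [two_smul]; exact h
    simpa using h2
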